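/- In three variables, the sequence R → P_r → (P_{r-1})^3 → (P_{r-2})^3 → P_{r-3} → 0 given by inclusion of constants, gradient, curl, and divergence is exact: kernel of grad is the constants, kernel of curl equals image of grad, kernel of div equals image of curl, and div is surjective onto P_{r-3}. -/

import Mathlib

open MvPolynomial

/-- `degLE n p` means `p ∈ P_n`, with the convention `P_n = {0}` for `n < 0`. -/
def degLE (n : ℤ) (p : MvPolynomial (Fin 3) ℝ) : Prop :=
  if 0 ≤ n then p.totalDegree ≤ n.toNat else p = 0

/-- The three-dimensional curl of a polynomial vector field. -/
noncomputable def curl3 (v : Fin 3 → MvPolynomial (Fin 3) ℝ) : Fin 3 → MvPolynomial (Fin 3) ℝ :=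
  ![pderiv 1 (v 2) - pderiv 2 (v 1),
    pderiv 2 (v 0) - pderiv 0 (v 2),
    pderiv 0 (v 1) - pderiv 1 (v 0)]

namespace GCD3

noncomputable section

abbrev P3 : Type := MvPolynomial (Fin 3) ℝ

/-- Total degree of a monomial exponent vector. -/
def D (m : Fin 3 →₀ ℕ) : ℕ := m.sum fun _ e => e

lemma D_add (a b : Fin 3 →₀ ℕ) : D (a + b) = D a + D b :=
  Finsupp.sum_add_index' (fun _ => rfl) (fun _ _ _ => rfl)

lemma D_single (i : Fin 3) (n : ℕ) : D (Finsupp.single i n) = n :=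
  Finsupp.sum_single_index rfl

lemma D_eq_sum (m : Fin 3 →₀ ℕ) : D m = ∑ i : Fin 3, m i :=
  Finsupp.sum_fintype _ _ (fun _ => rfl)

lemma D_sub_single (m : Fin 3 →₀ ℕ) (i : Fin 3) (h : m i ≠ 0) :
    D (m - Finsupp.single i 1) + 1 = D m := by
  have h1 : Finsupp.single i 1 ≤ m := by
    rwa [Finsupp.single_le_iff, Nat.one_le_iff_ne_zero]
  have h2 : m - Finsupp.single i 1 + Finsupp.single i 1 = m := tsub_add_cancel_of_le h1
  calc D (m - Finsupp.single i 1) + 1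
      = D (m - Finsupp.single i 1) + D (Finsupp.single i 1) := by rw [D_single]
    _ = D (m - Finsupp.single i 1 + Finsupp.single i 1) := (D_add _ _).symm
    _ = D m := by rw [h2]

/-- The weighted inverse of the (shifted) Euler operator: scales the degree-`d`
homogeneous component by `1/(d+k)`. -/
def Nop (k : ℕ) (p : P3) : P3 :=
  ∑ m ∈ p.support, monomial m (((D m : ℝ) + k)⁻¹ * coeff m p)

lemma coeff_Nop (k : ℕ) (p : P3) (m : Fin 3 →₀ ℕ) :
    coeff m (Nop k p) = ((D m : ℝ) + k)⁻¹ * coeff m p := by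
  rw [Nop, coeff_sum]
  simp only [coeff_monomial]
  rw [Finset.sum_ite_eq' p.support m (fun m' => ((D m' : ℝ) + k)⁻¹ * coeff m' p)]
  split_ifs with h
  · rfl
  · rw [notMem_support_iff.mp h, mul_zero]

lemma Nop_add (k : ℕ) (p q : P3) : Nop k (p + q) = Nop k p + Nop k q := by
  ext m; simp [coeff_Nop, mul_add]

lemma Nop_sub (k : ℕ) (p q : P3) : Nop k (p - q) = Nop k p - Nop k q := by
  ext m; simp [coeff_Nop, mul_sub]

lemma Nop_zero (k : ℕ) : Nop k 0 = 0 := by simp [Nop]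

lemma Nop_monomial (k : ℕ) (m : Fin 3 →₀ ℕ) (c : ℝ) :
    Nop k (monomial m c) = monomial m (((D m : ℝ) + k)⁻¹ * c) := by
  ext n
  rw [coeff_Nop, coeff_monomial, coeff_monomial]
  split_ifs with h
  · subst h; rfl
  · rw [mul_zero]

lemma support_Nop_subset (k : ℕ) (p : P3) : (Nop k p).support ⊆ p.support := by
  intro m hm
  rw [mem_support_iff] at hm ⊢
  intro h
  rw [coeff_Nop, h, mul_zero] at hm
  exact hm rfl

lemma totalDegree_Nop_le (k : ℕ) (p : P3) : (Nop k p).totalDegree ≤ p.totalDegree :=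
  totalDegree_le_of_support_subset (support_Nop_subset k p)

lemma pderiv_Nop (i : Fin 3) (k : ℕ) (p : P3) :
    pderiv i (Nop k p) = Nop (k + 1) (pderiv i p) := by
  induction p using MvPolynomial.induction_on' with
  | add p q hp hq => rw [Nop_add, map_add, map_add, Nop_add, hp, hq]
  | monomial m c =>
    rw [Nop_monomial, pderiv_monomial, pderiv_monomial, Nop_monomial]
    by_cases h : m i = 0
    · simp [h]
    · have hD := D_sub_single m i h
      have hDr : (D (m - Finsupp.single i 1) : ℝ) = (D m : ℝ) - 1 := by
        have : ((D (m - Finsupp.single i 1) + 1 : ℕ) : ℝ) = ((D m : ℕ) : ℝ) := by rw [hD]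
        push_cast at this; linarith
      rw [hDr]
      congr 1
      push_cast
      ring_nf

lemma sum_X_mul_pderiv_monomial (m : Fin 3 →₀ ℕ) (c : ℝ) :
    ∑ i : Fin 3, X i * pderiv i (monomial m c) = monomial m ((D m : ℝ) * c) := by
  have hterm : ∀ i : Fin 3, X i * pderiv i (monomial m c) = monomial m ((m i : ℝ) * c) := by
    intro i
    rw [pderiv_monomial]
    by_cases h : m i = 0
    · simp [h]
    · rw [X, monomial_mul]
      have h1 : Finsupp.single i 1 ≤ m := by
        rwa [Finsupp.single_le_iff, Nat.one_le_iff_ne_zero]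
      rw [add_tsub_cancel_of_le h1]
      congr 1
      ring
  rw [Finset.sum_congr rfl fun i _ => hterm i, ← map_sum, ← Finset.sum_mul]
  congr 2
  rw [D_eq_sum]
  push_cast
  rfl

/-- The key homotopy identity: `Nop k (k • p + E p) = p` for `k ≠ 0`, where `E` is the
Euler operator `∑ Xᵢ ∂ᵢ`. -/
lemma key (k : ℕ) (hk : k ≠ 0) (p : P3) :
    Nop k (C (k : ℝ) * p + ∑ i : Fin 3, X i * pderiv i p) = p := by
  induction p using MvPolynomial.induction_on' with
  | add p q hp hq =>
    have : C (k : ℝ) * (p + q) + ∑ i : Fin 3, X i * pderiv i (p + q)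
        = (C (k : ℝ) * p + ∑ i : Fin 3, X i * pderiv i p)
          + (C (k : ℝ) * q + ∑ i : Fin 3, X i * pderiv i q) := by
      simp only [map_add, mul_add, Finset.sum_add_distrib]
      ring
    rw [this, Nop_add, hp, hq]
  | monomial m c =>
    rw [sum_X_mul_pderiv_monomial, C_mul_monomial, ← map_add, Nop_monomial]
    congr 1
    have hne : (D m : ℝ) + k ≠ 0 := by
      have : 0 < k := Nat.pos_of_ne_zero hk
      positivity
    field_simp
    ring

lemma pderiv_comm (i j : Fin 3) (p : P3) :
    pderiv i (pderiv j p) = pderiv j (pderiv i p) := by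
  induction p using MvPolynomial.induction_on' with
  | add p q hp hq => simp [map_add, hp, hq]
  | monomial m c =>
    by_cases hij : i = j
    · subst hij; rfl
    · simp only [pderiv_monomial]
      have h1 : ((m - Finsupp.single j 1 : Fin 3 →₀ ℕ)) i = m i := by
        simp [Finsupp.tsub_apply, Finsupp.single_apply, Ne.symm hij]
      have h2 : ((m - Finsupp.single i 1 : Fin 3 →₀ ℕ)) j = m j := by
        simp [Finsupp.tsub_apply, Finsupp.single_apply, hij]
      rw [h1, h2, tsub_tsub, tsub_tsub, add_comm]
      congr 1
      ring

lemma pderiv_X' (i j : Fin 3) : pderiv i (X j : P3) = if i = j then 1 else 0 := by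
  rcases eq_or_ne i j with h | h
  · subst h; rw [if_pos rfl, pderiv_X_self]
  · rw [if_neg h, pderiv_X_of_ne (Ne.symm h)]

/- degLE lemmas -/

lemma degLE_zero (n : ℤ) : degLE n 0 := by
  unfold degLE; split <;> simp

lemma degLE_add {n : ℤ} {p q : P3} (hp : degLE n p) (hq : degLE n q) : degLE n (p + q) := by
  unfold degLE at *
  split at hp
  · rw [if_pos (by assumption)] at hq ⊢
    exact (totalDegree_add p q).trans (max_le hp hq)
  · rw [if_neg (by assumption)] at hq ⊢
    rw [hp, hq, add_zero]

lemma degLE_neg {n : ℤ} {p : P3} (hp : degLE n p) : degLE n (-p) := by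
  unfold degLE at *
  split at hp
  · rw [if_pos (by assumption), totalDegree_neg]; exact hp
  · rw [if_neg (by assumption), hp, neg_zero]

lemma degLE_sub {n : ℤ} {p q : P3} (hp : degLE n p) (hq : degLE n q) : degLE n (p - q) := by
  rw [sub_eq_add_neg]; exact degLE_add hp (degLE_neg hq)

lemma degLE_Nop (k : ℕ) {n : ℤ} {p : P3} (hp : degLE n p) : degLE n (Nop k p) := by
  unfold degLE at *
  split at hp
  · rw [if_pos (by assumption)]; exact (totalDegree_Nop_le k p).trans hp
  · rw [if_neg (by assumption), hp, Nop_zero]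

lemma degLE_X_mul (j : Fin 3) {n : ℤ} {p : P3} (hp : degLE n p) : degLE (n + 1) (X j * p) := by
  unfold degLE at *
  split at hp
  · rw [if_pos (by omega)]
    refine (totalDegree_mul _ _).trans ?_
    rw [totalDegree_X]
    omega
  · rw [hp, mul_zero]
    split <;> simp

lemma degLE_totalDegree {n : ℤ} (h : 0 ≤ n) {p : P3} (hp : degLE n p) :
    p.totalDegree ≤ n.toNat := by
  unfold degLE at hp; rwa [if_pos h] at hp

lemma totalDegree_degLE {n : ℤ} (h : 0 ≤ n) {p : P3} (hp : p.totalDegree ≤ n.toNat) :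
    degLE n p := by
  unfold degLE; rwa [if_pos h]

end
end GCD3

/-- Exactness of `ℝ → P_r → (P_{r-1})³ → (P_{r-2})³ → P_{r-3} → 0` (inclusion of constants,
gradient, curl, divergence) in three variables: the kernel of `grad` is the constants,
the kernel of `curl` equals the image of `grad`, the kernel of `div` equals the image
of `curl`, and `div` is surjective onto `P_{r-3}`. -/
theorem grad_curl_div_exact_3d (r : ℕ) :
    (∀ p : MvPolynomial (Fin 3) ℝ, p.totalDegree ≤ r →
      ((∀ i, pderiv i p = 0) ↔ ∃ c : ℝ, p = C c)) ∧
    (∀ v : Fin 3 → MvPolynomial (Fin 3) ℝ, (∀ i, degLE ((r : ℤ) - 1) (v i)) →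
      (curl3 v = 0 ↔
        ∃ p : MvPolynomial (Fin 3) ℝ, p.totalDegree ≤ r ∧ ∀ i, v i = pderiv i p)) ∧
    (∀ w : Fin 3 → MvPolynomial (Fin 3) ℝ, (∀ i, degLE ((r : ℤ) - 2) (w i)) →
      (pderiv 0 (w 0) + pderiv 1 (w 1) + pderiv 2 (w 2) = 0 ↔
        ∃ v : Fin 3 → MvPolynomial (Fin 3) ℝ, (∀ i, degLE ((r : ℤ) - 1) (v i)) ∧ w = curl3 v)) ∧
    (∀ q : MvPolynomial (Fin 3) ℝ, degLE ((r : ℤ) - 3) q →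
      ∃ w : Fin 3 → MvPolynomial (Fin 3) ℝ, (∀ i, degLE ((r : ℤ) - 2) (w i)) ∧
        pderiv 0 (w 0) + pderiv 1 (w 1) + pderiv 2 (w 2) = q) := by
  refine ⟨?_, ?_, ?_, ?_⟩
  · -- Part 1: kernel of grad = constants
    intro p _
    constructor
    · intro h
      have hk := GCD3.key 1 one_ne_zero p
      simp only [h, mul_zero, Finset.sum_const_zero, add_zero, Nat.cast_one, map_one,
        one_mul] at hk
      refine ⟨coeff 0 p, ?_⟩
      ext m
      rw [coeff_C]
      split_ifs with h0
      · rw [← h0]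
      · -- m ≠ 0, show coeff m p = 0
        have hcm := congrArg (coeff m) hk
        rw [GCD3.coeff_Nop] at hcm
        push_cast at hcm
        have hD : GCD3.D m ≠ 0 := by
          intro hD0
          apply h0
          rw [GCD3.D_eq_sum] at hD0
          have hall := Finset.sum_eq_zero_iff.mp hD0
          ext i
          simpa using (hall i (Finset.mem_univ i)).symm
        have h1 : ((GCD3.D m : ℝ) + 1) ≠ 0 := by positivity
        have h3 : ((GCD3.D m : ℝ)) * coeff m p = 0 := by
          have h4 := congrArg (fun x => ((GCD3.D m : ℝ) + 1) * x) hcm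
          rw [← mul_assoc, mul_inv_cancel₀ h1, one_mul] at h4
          linarith
        rcases mul_eq_zero.mp h3 with h5 | h5
        · exact absurd (by exact_mod_cast h5) hD
        · exact h5
    · rintro ⟨c, rfl⟩ i
      exact pderiv_C
  · -- Part 2: kernel of curl = image of grad
    intro v hv
    constructor
    · intro hc
      have e0 : pderiv 1 (v 2) = pderiv 2 (v 1) :=
        sub_eq_zero.mp (by simpa [curl3] using congrFun hc 0)
      have e1 : pderiv 2 (v 0) = pderiv 0 (v 2) :=
        sub_eq_zero.mp (by simpa [curl3] using congrFun hc 1)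
      have e2 : pderiv 0 (v 1) = pderiv 1 (v 0) :=
        sub_eq_zero.mp (by simpa [curl3] using congrFun hc 2)
      refine ⟨GCD3.Nop 0 (∑ j : Fin 3, X j * v j), ?_, ?_⟩
      · have hX : ∀ j : Fin 3, degLE (r : ℤ) (X j * v j) := by
          intro j
          have := GCD3.degLE_X_mul j (hv j)
          rwa [sub_add_cancel] at this
        have hsum : degLE (r : ℤ) (∑ j : Fin 3, X j * v j) := by
          rw [Fin.sum_univ_three]
          exact GCD3.degLE_add (GCD3.degLE_add (hX 0) (hX 1)) (hX 2)
        have := GCD3.degLE_totalDegree (by positivity) (GCD3.degLE_Nop 0 hsum)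
        rwa [Int.toNat_natCast] at this
      · intro i
        rw [GCD3.pderiv_Nop]
        have hkey := GCD3.key 1 one_ne_zero (v i)
        rw [Nat.cast_one, map_one, one_mul] at hkey
        have hsum : pderiv i (∑ j : Fin 3, X j * v j)
            = v i + ∑ j : Fin 3, X j * pderiv j (v i) := by
          fin_cases i <;>
          · rw [map_sum]
            simp only [Fin.sum_univ_three, pderiv_mul, GCD3.pderiv_X', Fin.isValue]
            simp [e0, e1, e2]
            ring
        rw [show (0 + 1 : ℕ) = 1 from rfl, hsum]
        exact hkey.symm
    · rintro ⟨p, _, hp⟩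
      funext i
      fin_cases i <;> simp [curl3, hp, GCD3.pderiv_comm]
  · -- Part 3: kernel of div = image of curl
    intro w hw
    constructor
    · intro hdiv
      have hX : ∀ (a b : Fin 3), degLE ((r : ℤ) - 1) (X a * w b) := by
        intro a b
        have := GCD3.degLE_X_mul a (hw b)
        rwa [show (r : ℤ) - 2 + 1 = r - 1 by ring] at this
      refine ⟨fun i => GCD3.Nop 1
        (![X 2 * w 1 - X 1 * w 2, X 0 * w 2 - X 2 * w 0, X 1 * w 0 - X 0 * w 1] i), ?_, ?_⟩
      · intro i
        apply GCD3.degLE_Nop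
        fin_cases i
        · exact GCD3.degLE_sub (hX 2 1) (hX 1 2)
        · exact GCD3.degLE_sub (hX 0 2) (hX 2 0)
        · exact GCD3.degLE_sub (hX 1 0) (hX 0 1)
      · set v : Fin 3 → MvPolynomial (Fin 3) ℝ := fun i => GCD3.Nop 1
          (![X 2 * w 1 - X 1 * w 2, X 0 * w 2 - X 2 * w 0, X 1 * w 0 - X 0 * w 1] i) with hvdef
        have hv0 : v 0 = GCD3.Nop 1 (X 2 * w 1 - X 1 * w 2) := rfl
        have hv1 : v 1 = GCD3.Nop 1 (X 0 * w 2 - X 2 * w 0) := rfl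
        have hv2 : v 2 = GCD3.Nop 1 (X 1 * w 0 - X 0 * w 1) := rfl
        have c0 : pderiv 1 (v 2) - pderiv 2 (v 1) = w 0 := by
          rw [hv1, hv2, GCD3.pderiv_Nop, GCD3.pderiv_Nop, ← GCD3.Nop_sub,
            show (1 + 1 : ℕ) = 2 from rfl]
          have hrw : pderiv 1 (X 1 * w 0 - X 0 * w 1) - pderiv 2 (X 0 * w 2 - X 2 * w 0)
              = C ((2 : ℕ) : ℝ) * w 0 + ∑ i : Fin 3, X i * pderiv i (w 0) := by
            simp only [map_sub, pderiv_mul, GCD3.pderiv_X', Fin.sum_univ_three]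
            simp only [reduceIte, Fin.isValue, one_mul, zero_mul]
            push_cast
            simp only [map_ofNat]
            linear_combination (-(X 0 : MvPolynomial (Fin 3) ℝ)) * hdiv
          rw [hrw, GCD3.key 2 (by norm_num)]
        have c1 : pderiv 2 (v 0) - pderiv 0 (v 2) = w 1 := by
          rw [hv0, hv2, GCD3.pderiv_Nop, GCD3.pderiv_Nop, ← GCD3.Nop_sub,
            show (1 + 1 : ℕ) = 2 from rfl]
          have hrw : pderiv 2 (X 2 * w 1 - X 1 * w 2) - pderiv 0 (X 1 * w 0 - X 0 * w 1)
              = C ((2 : ℕ) : ℝ) * w 1 + ∑ i : Fin 3, X i * pderiv i (w 1) := by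
            simp only [map_sub, pderiv_mul, GCD3.pderiv_X', Fin.sum_univ_three]
            simp only [reduceIte, Fin.isValue, one_mul, zero_mul]
            push_cast
            simp only [map_ofNat]
            linear_combination (-(X 1 : MvPolynomial (Fin 3) ℝ)) * hdiv
          rw [hrw, GCD3.key 2 (by norm_num)]
        have c2 : pderiv 0 (v 1) - pderiv 1 (v 0) = w 2 := by
          rw [hv0, hv1, GCD3.pderiv_Nop, GCD3.pderiv_Nop, ← GCD3.Nop_sub,
            show (1 + 1 : ℕ) = 2 from rfl]
          have hrw : pderiv 0 (X 0 * w 2 - X 2 * w 0) - pderiv 1 (X 2 * w 1 - X 1 * w 2)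
              = C ((2 : ℕ) : ℝ) * w 2 + ∑ i : Fin 3, X i * pderiv i (w 2) := by
            simp only [map_sub, pderiv_mul, GCD3.pderiv_X', Fin.sum_univ_three]
            simp only [reduceIte, Fin.isValue, one_mul, zero_mul]
            push_cast
            simp only [map_ofNat]
            linear_combination (-(X 2 : MvPolynomial (Fin 3) ℝ)) * hdiv
          rw [hrw, GCD3.key 2 (by norm_num)]
        funext i
        fin_cases i <;> simp [curl3, c0, c1, c2]
    · rintro ⟨v, -, rfl⟩
      simp only [curl3, Matrix.cons_val_zero, Matrix.cons_val_one, Matrix.head_cons,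
        Matrix.cons_val_two, Matrix.tail_cons]
      rw [map_sub, map_sub, map_sub, GCD3.pderiv_comm 1 0 (v 2), GCD3.pderiv_comm 2 0 (v 1),
        GCD3.pderiv_comm 2 1 (v 0)]
      ring
  · -- Part 4: div is surjective
    intro q hq
    refine ⟨fun i => GCD3.Nop 2 (X i * q), ?_, ?_⟩
    · intro i
      apply GCD3.degLE_Nop
      have := GCD3.degLE_X_mul i hq
      rwa [show (r : ℤ) - 3 + 1 = r - 2 by ring] at this
    · show pderiv 0 (GCD3.Nop 2 (X 0 * q)) + pderiv 1 (GCD3.Nop 2 (X 1 * q))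
        + pderiv 2 (GCD3.Nop 2 (X 2 * q)) = q
      rw [GCD3.pderiv_Nop, GCD3.pderiv_Nop, GCD3.pderiv_Nop, ← GCD3.Nop_add, ← GCD3.Nop_add,
        show (2 + 1 : ℕ) = 3 from rfl]
      have hrw : pderiv 0 (X 0 * q) + pderiv 1 (X 1 * q) + pderiv 2 (X 2 * q)
          = C ((3 : ℕ) : ℝ) * q + ∑ i : Fin 3, X i * pderiv i q := by
        simp only [pderiv_mul, GCD3.pderiv_X', Fin.sum_univ_three]
        simp only [reduceIte, Fin.isValue, one_mul, zero_mul]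
        push_cast
        simp only [map_ofNat]
        ring
      rw [hrw, GCD3.key 3 (by norm_num)]
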